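/- arXiv:2002.07513 — 3 statements merged into one kernel-verified Lean document; each statement's English description precedes it below -/
import Mathlib

section
/- Let M ≥ 1. Let p₁, p₂ : ℝ^M → ℝ be continuously differentiable with compact support and let φ₁, φ₂ : ℝ^M → ℝ be twice continuously differentiable. Then ∫_{ℝ^M} [ div(p₁∇φ₁ − p₂∇φ₂)(x) · (φ₁(x) − φ₂(x)) + (1/2)(p₁(x) − p₂(x))(‖∇φ₁(x)‖² − ‖∇φ₂(x)‖²) ] dx = −(1/2) ∫_{ℝ^M} (p₁(x) + p₂(x)) ‖∇φ₁(x) − ∇φ₂(x)‖² dx. -/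
open MeasureTheory

/-- Divergence of a vector field on `ℝ^M`: the sum of the partial derivatives
of the coordinate functions. -/
noncomputable def ediv {M : ℕ} (F : EuclideanSpace ℝ (Fin M) → EuclideanSpace ℝ (Fin M))
    (x : EuclideanSpace ℝ (Fin M)) : ℝ :=
  ∑ i, fderiv ℝ F x (EuclideanSpace.single i 1) i

section Aux

variable {M : ℕ}
local notation "E" => EuclideanSpace ℝ (Fin M)

lemma coord_fderiv_aux (G : E → E) (x v : E) (hG : DifferentiableAt ℝ G x) (i : Fin M) :
    fderiv ℝ G x v i = fderiv ℝ (fun y => G y i) x v := by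
  have : (fun y => G y i) = (EuclideanSpace.proj (𝕜 := ℝ) i) ∘ G := rfl
  rw [this, fderiv_comp x (ContinuousLinearMap.differentiableAt _) hG]
  rw [ContinuousLinearMap.fderiv]; rfl

lemma integral_ediv_zero_aux (G : E → E) (hG : ContDiff ℝ 1 G) (hc : HasCompactSupport G) :
    ∫ x, ediv G x = 0 := by
  have hGd := hG.differentiable one_ne_zero
  have hint : ∀ i : Fin M, Integrable
      (fun x => fderiv ℝ (fun y => G y i) x (EuclideanSpace.single i 1)) (volume : Measure E) := by
    intro i
    have hfi : ContDiff ℝ 1 (fun y => G y i) :=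
      (EuclideanSpace.proj (𝕜 := ℝ) i).contDiff.comp hG
    have hci : HasCompactSupport (fun y => G y i) :=
      hc.comp_left (g := fun z : E => z i) rfl
    apply Continuous.integrable_of_hasCompactSupport
    · exact (hfi.fderiv_right (m := 0) le_rfl).continuous.clm_apply continuous_const
    · exact (hci.fderiv (𝕜 := ℝ)).comp_left
        (g := fun L : E →L[ℝ] ℝ => L (EuclideanSpace.single i 1)) (by simp)
  have hzero : ∀ i : Fin M,
      ∫ x, fderiv ℝ (fun y => G y i) x (EuclideanSpace.single i 1) = 0 := by
    intro i
    have hfi : ContDiff ℝ 1 (fun y => G y i) :=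
      (EuclideanSpace.proj (𝕜 := ℝ) i).contDiff.comp hG
    have hci : HasCompactSupport (fun y => G y i) :=
      hc.comp_left (g := fun z : E => z i) rfl
    have := integral_mul_fderiv_eq_neg_fderiv_mul_of_integrable (μ := (volume : Measure E))
      (f := fun y => G y i) (g := fun _ => (1:ℝ)) (v := EuclideanSpace.single i 1)
      (by simpa only [mul_one] using hint i) (by simp [fderiv_const])
      (by simpa only [mul_one] using hfi.continuous.integrable_of_hasCompactSupport hci)
      (fun x _ => hfi.differentiable one_ne_zero x) (fun x _ => differentiableAt_const (1:ℝ))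
    simpa using this.symm
  have : (fun x => ediv G x)
      = fun x => ∑ i, fderiv ℝ (fun y => G y i) x (EuclideanSpace.single i 1) := by
    funext x
    exact Finset.sum_congr rfl fun i _ => coord_fderiv_aux G x _ (hGd x) i
  rw [this, integral_finset_sum _ (fun i _ => hint i)]
  simp [hzero]

lemma grad_contDiff_aux (φ : E → ℝ) (hφ : ContDiff ℝ 2 φ) : ContDiff ℝ 1 (gradient φ) := by
  have : gradient φ = fun x =>
      (InnerProductSpace.toDual ℝ (EuclideanSpace ℝ (Fin M))).symm (fderiv ℝ φ x) := rfl
  rw [this]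
  exact (InnerProductSpace.toDual ℝ (EuclideanSpace ℝ (Fin M))).symm.contDiff.comp
    (hφ.fderiv_right (m := 1) (by norm_num))

lemma fderiv_eq_inner_gradient_aux (ψ : E → ℝ) (x v : E) :
    fderiv ℝ ψ x v = @inner ℝ _ _ (gradient ψ x) v := by
  simp [gradient, InnerProductSpace.toDual_symm_apply]

lemma gradient_sub_aux (f g : E → ℝ) (x : E) (hf : DifferentiableAt ℝ f x)
    (hg : DifferentiableAt ℝ g x) :
    gradient (fun y => f y - g y) x = gradient f x - gradient g x := by
  unfold gradient
  rw [fderiv_fun_sub hf hg, map_sub]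

lemma ediv_smul_aux (ψ : E → ℝ) (F : E → E) (x : E) (hψ : DifferentiableAt ℝ ψ x)
    (hF : DifferentiableAt ℝ F x) :
    ediv (fun y => ψ y • F y) x = ψ x * ediv F x + @inner ℝ _ _ (gradient ψ x) (F x) := by
  unfold ediv
  have h : ∀ i : Fin M, fderiv ℝ (fun y => ψ y • F y) x (EuclideanSpace.single i 1) i
      = ψ x * fderiv ℝ F x (EuclideanSpace.single i 1) i
        + fderiv ℝ ψ x (EuclideanSpace.single i 1) * F x i := by
    intro i
    rw [fderiv_fun_smul hψ hF]
    simp [PiLp.smul_apply, PiLp.add_apply]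
  rw [Finset.sum_congr rfl fun i _ => h i, Finset.sum_add_distrib, ← Finset.mul_sum]
  congr 1
  rw [PiLp.inner_apply]
  refine Finset.sum_congr rfl fun i _ => ?_
  rw [fderiv_eq_inner_gradient_aux, PiLp.inner_apply]
  simp [EuclideanSpace.single_apply, mul_comm]

lemma key_algebra_aux (a b : E) (p q ψ d : ℝ) :
    d * ψ + (1 / 2) * (p - q) * (‖a‖ ^ 2 - ‖b‖ ^ 2)
      = (ψ * d + @inner ℝ _ _ (a - b) (p • a - q • b))
        + (-(1 / 2) * ((p + q) * ‖a - b‖ ^ 2)) := by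
  have hab : ‖a - b‖ ^ 2 = ‖a‖ ^ 2 - 2 * @inner ℝ _ _ a b + ‖b‖ ^ 2 := norm_sub_sq_real a b
  rw [inner_sub_left, inner_sub_right, inner_sub_right, real_inner_smul_right,
    real_inner_smul_right, real_inner_smul_right, real_inner_smul_right,
    real_inner_self_eq_norm_sq, real_inner_self_eq_norm_sq, hab]
  have hba : @inner ℝ _ _ b a = @inner ℝ _ _ a b := real_inner_comm a b
  rw [hba]
  ring

end Aux

theorem stmt_1 (M : ℕ) (hM : 1 ≤ M)
    (p₁ p₂ φ₁ φ₂ : EuclideanSpace ℝ (Fin M) → ℝ)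
    (hp₁ : ContDiff ℝ 1 p₁) (hp₂ : ContDiff ℝ 1 p₂)
    (hp₁c : HasCompactSupport p₁) (hp₂c : HasCompactSupport p₂)
    (hφ₁ : ContDiff ℝ 2 φ₁) (hφ₂ : ContDiff ℝ 2 φ₂) :
    ∫ x, (ediv (fun y => p₁ y • gradient φ₁ y - p₂ y • gradient φ₂ y) x * (φ₁ x - φ₂ x)
        + (1 / 2) * (p₁ x - p₂ x) * (‖gradient φ₁ x‖ ^ 2 - ‖gradient φ₂ x‖ ^ 2))
      = -(1 / 2) * ∫ x, (p₁ x + p₂ x) * ‖gradient φ₁ x - gradient φ₂ x‖ ^ 2 := by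
  have hg1 : ContDiff ℝ 1 (gradient φ₁) := grad_contDiff_aux φ₁ hφ₁
  have hg2 : ContDiff ℝ 1 (gradient φ₂) := grad_contDiff_aux φ₂ hφ₂
  set F : EuclideanSpace ℝ (Fin M) → EuclideanSpace ℝ (Fin M) :=
    fun y => p₁ y • gradient φ₁ y - p₂ y • gradient φ₂ y with hFdef
  set ψ : EuclideanSpace ℝ (Fin M) → ℝ := fun y => φ₁ y - φ₂ y with hψdef
  have hF : ContDiff ℝ 1 F := (hp₁.smul hg1).sub (hp₂.smul hg2)
  have hFc : HasCompactSupport F :=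
    HasCompactSupport.comp₂_left (m := Sub.sub) (hp₁c.smul_right (f' := gradient φ₁))
      (hp₂c.smul_right (f' := gradient φ₂)) (sub_zero 0)
  have hψ : ContDiff ℝ 1 ψ := (hφ₁.sub hφ₂).of_le one_le_two
  set G : EuclideanSpace ℝ (Fin M) → EuclideanSpace ℝ (Fin M) := fun y => ψ y • F y with hGdef
  have hG : ContDiff ℝ 1 G := hψ.smul hF
  have hGc : HasCompactSupport G := hFc.mono (fun y hy => by
    simp only [G, Function.mem_support] at hy ⊢
    exact fun h => hy (by rw [h, smul_zero]))
  have key : ∀ x, ediv F x * ψ x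
      + (1 / 2) * (p₁ x - p₂ x) * (‖gradient φ₁ x‖ ^ 2 - ‖gradient φ₂ x‖ ^ 2)
      = ediv G x + (-(1 / 2) * ((p₁ x + p₂ x) * ‖gradient φ₁ x - gradient φ₂ x‖ ^ 2)) := by
    intro x
    have h1 : ediv G x = ψ x * ediv F x + @inner ℝ _ _ (gradient ψ x) (F x) :=
      ediv_smul_aux ψ F x (hψ.differentiable one_ne_zero x) (hF.differentiable one_ne_zero x)
    have h2 : gradient ψ x = gradient φ₁ x - gradient φ₂ x :=
      gradient_sub_aux φ₁ φ₂ x ((hφ₁.differentiable two_ne_zero) x)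
        ((hφ₂.differentiable two_ne_zero) x)
    rw [h1, h2]
    exact key_algebra_aux (gradient φ₁ x) (gradient φ₂ x) (p₁ x) (p₂ x) (ψ x) (ediv F x)
  have hIG : Integrable (fun x => ediv G x) (volume : Measure (EuclideanSpace ℝ (Fin M))) := by
    apply Continuous.integrable_of_hasCompactSupport
    · apply continuous_finset_sum
      intro i _
      exact (EuclideanSpace.proj (𝕜 := ℝ) i).continuous.comp
        ((hG.fderiv_right (m := 0) le_rfl).continuous.clm_apply continuous_const)
    · exact (hGc.fderiv (𝕜 := ℝ)).comp_left
        (g := fun L : EuclideanSpace ℝ (Fin M) →L[ℝ] EuclideanSpace ℝ (Fin M) =>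
          ∑ i, L (EuclideanSpace.single i 1) i) (by simp)
  have hIC : Integrable
      (fun x => -(1 / 2) * ((p₁ x + p₂ x) * ‖gradient φ₁ x - gradient φ₂ x‖ ^ 2))
      (volume : Measure (EuclideanSpace ℝ (Fin M))) := by
    apply Continuous.integrable_of_hasCompactSupport
    · exact continuous_const.mul ((hp₁.continuous.add hp₂.continuous).mul
        (((hg1.continuous.sub hg2.continuous).norm).pow 2))
    · exact ((hp₁c.add hp₂c).mul_right).comp_left (g := fun r : ℝ => -(1 / 2) * r) (by simp)
  calc ∫ x, (ediv F x * (φ₁ x - φ₂ x)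
        + (1 / 2) * (p₁ x - p₂ x) * (‖gradient φ₁ x‖ ^ 2 - ‖gradient φ₂ x‖ ^ 2))
      = ∫ x, (ediv G x
          + (-(1 / 2) * ((p₁ x + p₂ x) * ‖gradient φ₁ x - gradient φ₂ x‖ ^ 2))) := by
        refine integral_congr_ae (Filter.Eventually.of_forall fun x => ?_)
        exact key x
    _ = (∫ x, ediv G x)
        + ∫ x, -(1 / 2) * ((p₁ x + p₂ x) * ‖gradient φ₁ x - gradient φ₂ x‖ ^ 2) :=
        integral_add hIG hIC
    _ = ∫ x, -(1 / 2) * ((p₁ x + p₂ x) * ‖gradient φ₁ x - gradient φ₂ x‖ ^ 2) := by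
        rw [integral_ediv_zero_aux G hG hGc, zero_add]
    _ = -(1 / 2) * ∫ x, (p₁ x + p₂ x) * ‖gradient φ₁ x - gradient φ₂ x‖ ^ 2 :=
        integral_const_mul _ _
end

section
/- Let c ≥ 0, T > 0, let V : ℝ → ℝ be twice continuously differentiable, and let p : [0,1] × [0,T] → ℝ be twice continuously differentiable with p(x,t) > 0 everywhere. Assume p satisfies ∂ₜp = ∂ₓ((1 + c·p)∂ₓp + p·V') on [0,1] × (0,T), together with the no-flux boundary conditions (1 + c·p)∂ₓp + p·V' = 0 at x = 0 and at x = 1 for all t ∈ (0,T). Then for every t ∈ (0,T), the free energy E(t) = ∫₀¹ (p(x,t) log p(x,t) + (c/2) p(x,t)² + V(x) p(x,t)) dx is differentiable in t with E'(t) = −∫₀¹ p(x,t) (∂ₓ(log p + c·p + V)(x,t))² dx, and in particular E'(t) ≤ 0. -/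
open MeasureTheory Set

theorem stmt_6 (c T : ℝ) (hc : 0 ≤ c) (hT : 0 < T)
    (V : ℝ → ℝ) (hV : ContDiff ℝ 2 V)
    (p : ℝ → ℝ → ℝ)
    (hp : ContDiff ℝ 2 (fun z : ℝ × ℝ => p z.1 z.2))
    (hppos : ∀ x ∈ Icc (0:ℝ) 1, ∀ t ∈ Icc (0:ℝ) T, 0 < p x t)
    (hpde : ∀ x ∈ Icc (0:ℝ) 1, ∀ t ∈ Ioo (0:ℝ) T,
      deriv (p x) t
        = deriv (fun y => (1 + c * p y t) * deriv (fun z => p z t) y + p y t * deriv V y) x)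
    (hbc0 : ∀ t ∈ Ioo (0:ℝ) T,
      (1 + c * p 0 t) * deriv (fun z => p z t) 0 + p 0 t * deriv V 0 = 0)
    (hbc1 : ∀ t ∈ Ioo (0:ℝ) T,
      (1 + c * p 1 t) * deriv (fun z => p z t) 1 + p 1 t * deriv V 1 = 0) :
    ∀ t ∈ Ioo (0:ℝ) T,
      HasDerivAt (fun τ => ∫ x in (0:ℝ)..1,
          (p x τ * Real.log (p x τ) + c / 2 * p x τ ^ 2 + V x * p x τ))
        (-∫ x in (0:ℝ)..1,
          p x t * (deriv (fun y => Real.log (p y t) + c * p y t + V y) x) ^ 2) t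
      ∧ (-∫ x in (0:ℝ)..1,
          p x t * (deriv (fun y => Real.log (p y t) + c * p y t + V y) x) ^ 2) ≤ 0 := by
  intro t₀ ht₀
  obtain ⟨ht₀0, ht₀T⟩ := ht₀
  set P : ℝ × ℝ → ℝ := fun z => p z.1 z.2 with hPdef
  have hPdiff : Differentiable ℝ P := hp.differentiable two_ne_zero
  have hPcont : Continuous P := hp.continuous
  -- partial derivatives
  set q : ℝ → ℝ → ℝ := fun x t => fderiv ℝ P (x, t) (1, 0) with hqdef
  set r : ℝ → ℝ → ℝ := fun x t => fderiv ℝ P (x, t) (0, 1) with hrdef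
  have hxderiv : ∀ (t y : ℝ), HasDerivAt (fun y => p y t) (q y t) y := by
    intro t y
    have h1 : HasDerivAt (fun y : ℝ => (y, t)) ((1 : ℝ), (0 : ℝ)) y :=
      (hasDerivAt_id y).prodMk (hasDerivAt_const y t)
    exact ((hPdiff (y, t)).hasFDerivAt.comp_hasDerivAt y h1)
  have htderiv : ∀ (x τ : ℝ), HasDerivAt (fun τ => p x τ) (r x τ) τ := by
    intro x τ
    have h1 : HasDerivAt (fun τ : ℝ => (x, τ)) ((0 : ℝ), (1 : ℝ)) τ :=
      (hasDerivAt_const τ x).prodMk (hasDerivAt_id τ)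
    exact ((hPdiff (x, τ)).hasFDerivAt.comp_hasDerivAt τ h1)
  have hq : ∀ (t y : ℝ), deriv (fun z => p z t) y = q y t := fun t y => (hxderiv t y).deriv
  have hr : ∀ (x τ : ℝ), deriv (p x) τ = r x τ := fun x τ => (htderiv x τ).deriv
  -- continuity / smoothness of partial derivatives
  have hfd : ContDiff ℝ 1 (fderiv ℝ P) := hp.fderiv_right (by norm_num)
  have hqC1 : ContDiff ℝ 1 (fun y : ℝ => q y t₀) := by
    have : ContDiff ℝ 1 (fun y : ℝ => fderiv ℝ P (y, t₀)) :=
      hfd.comp (contDiff_id.prodMk contDiff_const)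
    exact this.clm_apply contDiff_const
  have hrcont : Continuous (fun z : ℝ × ℝ => r z.1 z.2) := by
    have : Continuous (fderiv ℝ P) := hfd.continuous
    exact (this.comp (by fun_prop)).clm_apply continuous_const
  have hpxC2 : ∀ t : ℝ, ContDiff ℝ 2 (fun y => p y t) := fun t =>
    hp.comp (contDiff_id.prodMk contDiff_const)
  have hcontx : ∀ τ : ℝ, Continuous fun x => p x τ := fun τ => (hpxC2 τ).continuous
  have hVd : Differentiable ℝ V := hV.differentiable two_ne_zero
  have hV1 : ContDiff ℝ 1 (deriv V) := by
    have h2 : ContDiff ℝ (1 + 1 : ℕ) V := by exact_mod_cast hV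
    exact (contDiff_succ_iff_deriv.mp h2).2.2
  -- J : the flux, defined exactly as in the hypotheses
  set J : ℝ → ℝ := fun y =>
    (1 + c * p y t₀) * deriv (fun z => p z t₀) y + p y t₀ * deriv V y with hJdef
  have hJeq : J = fun y => (1 + c * p y t₀) * q y t₀ + p y t₀ * deriv V y := by
    funext y; rw [hJdef]; simp only [hq]
  have hJC1 : ContDiff ℝ 1 J := by
    rw [hJeq]
    have hpx1 : ContDiff ℝ 1 (fun y => p y t₀) := (hpxC2 t₀).of_le one_le_two
    exact ((contDiff_const.add (contDiff_const.mul hpx1)).mul hqC1).add (hpx1.mul hV1)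
  have hJdiff : Differentiable ℝ J := hJC1.differentiable one_ne_zero
  have hJ' : ∀ x, HasDerivAt J (deriv J x) x := fun x => (hJdiff x).hasDerivAt
  have hJcont : Continuous J := hJC1.continuous
  have hderivJcont : Continuous (deriv J) := (contDiff_one_iff_deriv.mp hJC1).2
  have ht₀Icc : t₀ ∈ Icc (0:ℝ) T := ⟨le_of_lt ht₀0, le_of_lt ht₀T⟩
  have hpos : ∀ x ∈ Icc (0:ℝ) 1, 0 < p x t₀ := fun x hx => hppos x hx t₀ ht₀Icc
  -- the spatial derivative of the "entropy variable"
  set u' : ℝ → ℝ := fun x => q x t₀ / p x t₀ + c * q x t₀ + deriv V x with hu'def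
  have hwderiv : ∀ x ∈ Icc (0:ℝ) 1,
      HasDerivAt (fun y => Real.log (p y t₀) + c * p y t₀ + V y) (u' x) x := by
    intro x hx
    have hne : p x t₀ ≠ 0 := ne_of_gt (hpos x hx)
    exact (((hxderiv t₀ x).log hne).add ((hxderiv t₀ x).const_mul c)).add (hVd x).hasDerivAt
  have hwderiv' : ∀ x ∈ Icc (0:ℝ) 1,
      deriv (fun y => Real.log (p y t₀) + c * p y t₀ + V y) x = u' x := fun x hx =>
    (hwderiv x hx).deriv
  have huderiv : ∀ x ∈ Icc (0:ℝ) 1,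
      HasDerivAt (fun y => Real.log (p y t₀) + 1 + c * p y t₀ + V y) (u' x) x := by
    intro x hx
    have hne : p x t₀ ≠ 0 := ne_of_gt (hpos x hx)
    have h1 : HasDerivAt (fun y => Real.log (p y t₀) + 1)
        (q x t₀ / p x t₀) x := ((hxderiv t₀ x).log hne).add_const 1
    exact (h1.add ((hxderiv t₀ x).const_mul c)).add (hVd x).hasDerivAt
  have hkey : ∀ x ∈ Icc (0:ℝ) 1, J x = p x t₀ * u' x := by
    intro x hx
    have hne : p x t₀ ≠ 0 := ne_of_gt (hpos x hx)
    have h1 : J x = (1 + c * p x t₀) * q x t₀ + p x t₀ * deriv V x := by rw [hJeq]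
    rw [h1, hu'def]
    field_simp
  have hJ0 : J 0 = 0 := hbc0 t₀ ⟨ht₀0, ht₀T⟩
  have hJ1 : J 1 = 0 := hbc1 t₀ ⟨ht₀0, ht₀T⟩
  -- choose ε for the dominated-derivative lemma
  set ε : ℝ := min t₀ (T - t₀) / 2 with hεdef
  have hε : 0 < ε := by
    have := lt_min ht₀0 (by linarith : (0:ℝ) < T - t₀)
    positivity
  have hε1 : ε ≤ t₀ / 2 := by
    have := min_le_left t₀ (T - t₀); rw [hεdef]; linarith
  have hε2 : ε ≤ (T - t₀) / 2 := by
    have := min_le_right t₀ (T - t₀); rw [hεdef]; linarith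
  have hballIcc : ∀ τ : ℝ, |τ - t₀| ≤ ε → τ ∈ Icc (0:ℝ) T := by
    intro τ hτ
    have h := abs_le.mp hτ
    constructor <;> [linarith; linarith]
  -- the uniform bound from compactness
  set Φ : ℝ × ℝ → ℝ :=
    fun z => (Real.log (P z) + 1 + c * P z + V z.1) * r z.1 z.2 with hΦdef
  set K : Set (ℝ × ℝ) := Icc (0:ℝ) 1 ×ˢ Icc (t₀ - ε) (t₀ + ε) with hKdef
  have hKsub : ∀ z ∈ K, 0 < P z := by
    rintro ⟨x, τ⟩ ⟨hx, hτ⟩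
    refine hppos x hx τ (hballIcc τ ?_)
    rw [abs_le]; exact ⟨by linarith [hτ.1], by linarith [hτ.2]⟩
  have hΦcont : ContinuousOn Φ K := by
    apply ContinuousOn.mul
    · apply ContinuousOn.add
      apply ContinuousOn.add
      apply ContinuousOn.add
      · exact ContinuousOn.log hPcont.continuousOn fun z hz => ne_of_gt (hKsub z hz)
      · exact continuousOn_const
      · exact (continuous_const.mul hPcont).continuousOn
      · exact (hV.continuous.comp continuous_fst).continuousOn
    · exact hrcont.continuousOn
  obtain ⟨M, hM⟩ := ((isCompact_Icc.prod isCompact_Icc).exists_bound_of_continuousOn hΦcont)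
  -- differentiation under the integral sign
  have hmain := intervalIntegral.hasDerivAt_integral_of_dominated_loc_of_deriv_le
    (F := fun τ x => p x τ * Real.log (p x τ) + c / 2 * p x τ ^ 2 + V x * p x τ)
    (F' := fun τ x => (Real.log (p x τ) + 1 + c * p x τ + V x) * r x τ)
    (a := 0) (b := 1) (μ := volume) (x₀ := t₀) (bound := fun _ => M) (Metric.ball_mem_nhds t₀ hε)
    ?_ ?_ ?_ ?_ ?_ ?_
  rotate_left
  · -- measurability of F τ
    filter_upwards with τ
    apply Measurable.aestronglyMeasurable
    exact (((hcontx τ).measurable.mul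
        (Real.measurable_log.comp (hcontx τ).measurable)).add
      (measurable_const.mul ((hcontx τ).measurable.pow_const 2))).add
      (hV.continuous.measurable.mul (hcontx τ).measurable)
  · -- integrability of F t₀
    apply ContinuousOn.intervalIntegrable
    rw [uIcc_of_le (zero_le_one)]
    apply ContinuousOn.add
    apply ContinuousOn.add
    · exact (hcontx t₀).continuousOn.mul
        ((hcontx t₀).continuousOn.log fun x hx => ne_of_gt (hpos x hx))
    · exact (continuous_const.mul ((hcontx t₀).pow 2)).continuousOn
    · exact (hV.continuous.mul (hcontx t₀)).continuousOn
  · -- measurability of F' t₀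
    apply Measurable.aestronglyMeasurable
    have hrmeas : Measurable fun x : ℝ => r x t₀ :=
      (hrcont.comp (continuous_id.prodMk continuous_const)).measurable
    exact ((((Real.measurable_log.comp (hcontx t₀).measurable).add
      measurable_const).add (measurable_const.mul (hcontx t₀).measurable)).add
      hV.continuous.measurable).mul hrmeas
  · -- uniform bound
    filter_upwards with x hx τ hτ
    have hx' : x ∈ Icc (0:ℝ) 1 := by
      rw [uIoc_of_le (zero_le_one)] at hx
      exact ⟨le_of_lt hx.1, hx.2⟩
    have hτ' : τ ∈ Icc (t₀ - ε) (t₀ + ε) := by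
      have := le_of_lt (mem_ball_iff_norm.mp hτ)
      have h := abs_le.mp this
      exact ⟨by linarith [h.1], by linarith [h.2]⟩
    exact hM (x, τ) ⟨hx', hτ'⟩
  · exact intervalIntegrable_const
  · -- differentiability in τ with the stated derivative
    filter_upwards with x hx τ hτ
    have hx' : x ∈ Icc (0:ℝ) 1 := by
      rw [uIoc_of_le (zero_le_one)] at hx
      exact ⟨le_of_lt hx.1, hx.2⟩
    have hτIcc : τ ∈ Icc (0:ℝ) T := by
      refine hballIcc τ ?_
      exact le_of_lt (mem_ball_iff_norm.mp hτ)
    have hposτ : 0 < p x τ := hppos x hx' τ hτIcc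
    have hne : p x τ ≠ 0 := ne_of_gt hposτ
    have h1 : HasDerivAt (fun τ => p x τ) (r x τ) τ := htderiv x τ
    have hA : HasDerivAt (fun τ => p x τ * Real.log (p x τ))
        (r x τ * Real.log (p x τ) + p x τ * (r x τ / p x τ)) τ :=
      h1.mul (h1.log hne)
    have hB : HasDerivAt (fun τ => c / 2 * p x τ ^ 2)
        (c / 2 * (2 * p x τ ^ 1 * r x τ)) τ := (h1.pow 2).const_mul (c / 2)
    have hC : HasDerivAt (fun τ => V x * p x τ) (V x * r x τ) τ := h1.const_mul (V x)
    have := (hA.add hB).add hC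
    convert this using 1
    · funext s; simp only [Pi.add_apply]
    · have hpr : p x τ * (r x τ / p x τ) = r x τ := by field_simp
      rw [hpr]; ring
  -- now rewrite the value of the derivative
  obtain ⟨-, hE⟩ := hmain
  have hval : (∫ x in (0:ℝ)..1, (Real.log (p x t₀) + 1 + c * p x t₀ + V x) * r x t₀)
      = -∫ x in (0:ℝ)..1,
          p x t₀ * (deriv (fun y => Real.log (p y t₀) + c * p y t₀ + V y) x) ^ 2 := by
    have step1 : (∫ x in (0:ℝ)..1, (Real.log (p x t₀) + 1 + c * p x t₀ + V x) * r x t₀)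
        = ∫ x in (0:ℝ)..1,
            (Real.log (p x t₀) + 1 + c * p x t₀ + V x) * deriv J x := by
      apply intervalIntegral.integral_congr
      intro x hx
      rw [uIcc_of_le (zero_le_one)] at hx
      have := hpde x hx t₀ ⟨ht₀0, ht₀T⟩
      beta_reduce
      rw [← hr x t₀, this]
    have hu'cont : ContinuousOn u' (Icc (0:ℝ) 1) := by
      apply ContinuousOn.add
      apply ContinuousOn.add
      · exact hqC1.continuous.continuousOn.div (hcontx t₀).continuousOn
          fun x hx => ne_of_gt (hpos x hx)
      · exact (continuous_const.mul hqC1.continuous).continuousOn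
      · exact hV1.continuous.continuousOn
    have hu'int : IntervalIntegrable u' volume 0 1 := by
      apply ContinuousOn.intervalIntegrable
      rwa [uIcc_of_le (zero_le_one)]
    have hIBP := intervalIntegral.integral_mul_deriv_eq_deriv_mul
      (u := fun x => Real.log (p x t₀) + 1 + c * p x t₀ + V x) (v := J)
      (u' := u') (v' := deriv J)
      (fun x hx => huderiv x (by rwa [uIcc_of_le (zero_le_one)] at hx))
      (fun x _ => hJ' x)
      hu'int (hderivJcont.intervalIntegrable 0 1)
    rw [step1, hIBP, hJ0, hJ1]
    have step3 : (∫ x in (0:ℝ)..1, u' x * J x)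
        = ∫ x in (0:ℝ)..1,
            p x t₀ * (deriv (fun y => Real.log (p y t₀) + c * p y t₀ + V y) x) ^ 2 := by
      apply intervalIntegral.integral_congr
      intro x hx
      rw [uIcc_of_le (zero_le_one)] at hx
      beta_reduce
      rw [hwderiv' x hx, hkey x hx]
      ring
    rw [step3]
    ring
  rw [hval] at hE
  refine ⟨hE, ?_⟩
  rw [neg_nonpos]
  apply intervalIntegral.integral_nonneg (zero_le_one)
  intro x hx
  exact mul_nonneg (le_of_lt (hpos x hx)) (sq_nonneg _)
end

section
/- Let d ≥ 1 and let φ : ℝ^d × ℝ → ℝ be twice continuously differentiable and satisfy the Hamilton–Jacobi equation ∂ₛφ(y,s) + (1/2)‖∇_y φ(y,s)‖² = 0 at every (y,s). For ε ∈ ℝ define Φ̃ : ℝ^d × ℝ^d × ℝ → ℝ by Φ̃(x₁, x, s) = 2φ(x₁,s) + ε⟨x, ∇_{x₁}φ(x₁,s)⟩. Then at every (x₁, x, s): ε² ∂ₛΦ̃ + (ε²/2)‖∇_{x₁}Φ̃‖² − ε⟨∇_{x₁}Φ̃, ∇_xΦ̃⟩ + ‖∇_xΦ̃‖² = (ε⁴/2)‖H_φ(x₁,s)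 x‖², where H_φ(x₁,s) denotes the spatial Hessian of φ(·,s) at x₁ (so H_φ(x₁,s)x is the Hessian applied to x). -/
set_option maxHeartbeats 1000000

open scoped RealInnerProductSpace

open ContinuousLinearMap InnerProductSpace in
theorem aux_stmt_14 {E : Type*} [NormedAddCommGroup E] [InnerProductSpace ℝ E]
    [CompleteSpace E] (ε : ℝ) (φ : E → ℝ → ℝ)
    (hφ : ContDiff ℝ 2 (fun z : E × ℝ => φ z.1 z.2))
    (hHJ : ∀ y : E, ∀ s : ℝ,
      deriv (φ y) s + (1 / 2) * ‖gradient (fun z => φ z s) y‖ ^ 2 = 0) :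
    ∀ (x₁ x : E) (s : ℝ),
      ε ^ 2 * deriv (fun s' => 2 * φ x₁ s' + ε * ⟪x, gradient (fun z => φ z s') x₁⟫) s
      + ε ^ 2 / 2 *
          ‖gradient (fun z => 2 * φ z s + ε * ⟪x, gradient (fun w => φ w s) z⟫) x₁‖ ^ 2
      - ε * ⟪gradient (fun z => 2 * φ z s + ε * ⟪x, gradient (fun w => φ w s) z⟫) x₁,
             gradient (fun z => 2 * φ x₁ s + ε * ⟪z, gradient (fun w => φ w s) x₁⟫) x⟫
      + ‖gradient (fun z => 2 * φ x₁ s + ε * ⟪z, gradient (fun w => φ w s) x₁⟫) x‖ ^ 2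
      = ε ^ 4 / 2 * ‖fderiv ℝ (fun z => gradient (fun w => φ w s) z) x₁ x‖ ^ 2 := by
  intro x₁ x s
  set F : E × ℝ → ℝ := fun z => φ z.1 z.2 with hFdef
  have hDF : ∀ z, HasFDerivAt F (fderiv ℝ F z) z :=
    fun z => ((hφ.differentiable two_ne_zero) z).hasFDerivAt
  have hDF' : ContDiff ℝ 1 (fderiv ℝ F) := hφ.fderiv_right (le_refl 2)
  set B : (E × ℝ) →L[ℝ] (E × ℝ) →L[ℝ] ℝ := fderiv ℝ (fderiv ℝ F) (x₁, s) with hBdef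
  have hB : HasFDerivAt (fderiv ℝ F) B (x₁, s) :=
    ((hDF'.differentiable one_ne_zero) _).hasFDerivAt
  have hsymm : ∀ v w, B v w = B w v := fun v w => second_derivative_symmetric hDF hB v w
  -- spatial derivative and gradient characterization
  have hsp : ∀ (y : E) (t : ℝ), HasFDerivAt (fun z : E => φ z t)
      ((fderiv ℝ F (y, t)).comp (inl ℝ E ℝ)) y :=
    fun y t => by have := (hDF (y, t)).comp y (hasFDerivAt_prodMk_left (𝕜 := ℝ) y t); exact this
  have hinner : ∀ (y : E) (t : ℝ) (w : E), ⟪gradient (fun z : E => φ z t) y, w⟫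
      = fderiv ℝ F (y, t) (w, 0) := by
    intro y t w
    rw [(hasFDerivAt_iff_hasGradientAt.mp (hsp y t)).gradient, toDual_symm_apply]
    simp
  set p : E := gradient (fun z : E => φ z s) x₁ with hpdef
  -- step1 : differentiability of z ↦ DF(z,s)
  have step1 : HasFDerivAt (fun z : E => fderiv ℝ F (z, s)) (B.comp (inl ℝ E ℝ)) x₁ :=
    by have := HasFDerivAt.comp (𝕜 := ℝ) (g := fderiv ℝ F) (g' := B) (f := fun e : E => (e, s)) x₁ hB (hasFDerivAt_prodMk_left (𝕜 := ℝ) x₁ s); exact this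
  set Pre : ((E × ℝ) →L[ℝ] ℝ) →L[ℝ] (E →L[ℝ] ℝ) :=
    (ContinuousLinearMap.compL ℝ E (E × ℝ) ℝ).flip (inl ℝ E ℝ) with hPre
  have hPreApp : ∀ L : (E × ℝ) →L[ℝ] ℝ, Pre L = L.comp (inl ℝ E ℝ) := fun L => rfl
  set T : StrongDual ℝ E →L[ℝ] E :=
    ⟨⟨⟨fun ℓ => (toDual ℝ E).symm ℓ, fun a b => map_add _ a b⟩,
      fun c ℓ => by simp⟩, (toDual ℝ E).symm.continuous⟩ with hT
  have hTApp : ∀ ℓ, T ℓ = (toDual ℝ E).symm ℓ := fun ℓ => rfl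
  set Hm : E →L[ℝ] E := T.comp (Pre.comp (B.comp (inl ℝ E ℝ))) with hHmdef
  -- step3 : differentiability of the gradient map
  have step3 : HasFDerivAt (fun z : E => gradient (fun w => φ w s) z) Hm x₁ := by
    have heq : (fun z : E => gradient (fun w => φ w s) z)
        = fun z : E => T (Pre (fderiv ℝ F (z, s))) := by
      funext z
      rw [(hasFDerivAt_iff_hasGradientAt.mp (hsp z s)).gradient, hTApp, hPreApp]
    have s2 : HasFDerivAt (⇑Pre ∘ fun z : E => fderiv ℝ F (z, s))
        (Pre.comp (B.comp (inl ℝ E ℝ))) x₁ := Pre.hasFDerivAt.comp (f := fun z : E => fderiv ℝ F (z, s)) x₁ step1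
    have s2' : HasFDerivAt (fun z : E => Pre (fderiv ℝ F (z, s)))
        (Pre.comp (B.comp (inl ℝ E ℝ))) x₁ := s2
    have s3 : HasFDerivAt (⇑T ∘ fun z : E => Pre (fderiv ℝ F (z, s))) Hm x₁ :=
      T.hasFDerivAt.comp (f := fun z : E => Pre (fderiv ℝ F (z, s))) x₁ s2'
    rw [heq]
    exact s3
  have hHm : ∀ h w : E, ⟪Hm h, w⟫ = B (h, 0) (w, 0) := by
    intro h w
    have h1 : Hm h = (toDual ℝ E).symm ((B ((h : E), (0:ℝ))).comp (inl ℝ E ℝ)) := by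
      rw [hHmdef]; simp [hTApp, hPreApp]
    rw [h1, toDual_symm_apply]
    simp
  have hHmsymm : ∀ a b : E, ⟪Hm a, b⟫ = ⟪Hm b, a⟫ := by
    intro a b; rw [hHm, hHm]; exact hsymm (a, 0) (b, 0)
  -- time derivative
  have curve : HasDerivAt (fun t : ℝ => ((x₁ : E), t)) (((0 : E), (1 : ℝ))) s :=
    (hasDerivAt_const s x₁).prodMk (hasDerivAt_id s)
  have h1 : HasDerivAt (fun t : ℝ => F (x₁, t)) (fderiv ℝ F (x₁, s) (0, 1)) s :=
    (hDF (x₁, s)).comp_hasDerivAt s curve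
  have hBt : HasDerivAt (fun t : ℝ => fderiv ℝ F (x₁, t)) (B (0, 1)) s :=
    by have := HasFDerivAt.comp_hasDerivAt (𝕜 := ℝ) (l := fderiv ℝ F) (l' := B) (f := fun t : ℝ => ((x₁ : E), t)) s hB curve; exact this
  have h2 : HasDerivAt (fun t : ℝ => fderiv ℝ F (x₁, t) (x, 0)) (B (0, 1) (x, 0)) s := by
    have := (ContinuousLinearMap.apply ℝ ℝ (((x : E), (0:ℝ)) :
      E × ℝ)).hasFDerivAt.comp_hasDerivAt s hBt
    exact this
  have hT1fun : (fun s' => 2 * φ x₁ s' + ε * ⟪x, gradient (fun z => φ z s') x₁⟫)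
      = fun s' => 2 * F (x₁, s') + ε * fderiv ℝ F (x₁, s') (x, 0) := by
    funext t
    rw [real_inner_comm, hinner x₁ t x]
  have hT1 : deriv (fun s' => 2 * φ x₁ s' + ε * ⟪x, gradient (fun z => φ z s') x₁⟫) s
      = 2 * fderiv ℝ F (x₁, s) (0, 1) + ε * B (0, 1) (x, 0) := by
    rw [hT1fun]
    exact ((h1.const_mul 2).add (h2.const_mul ε)).deriv
  -- gradient G1
  have hf1 : HasFDerivAt (fun z : E => 2 * φ z s + ε * ⟪x, gradient (fun w => φ w s) z⟫)
      ((2:ℝ) • ((fderiv ℝ F (x₁, s)).comp (inl ℝ E ℝ)) + ε • ((innerSL ℝ x).comp Hm)) x₁ := by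
    have c1 := (hsp x₁ s).const_mul (2:ℝ)
    have c2 : HasFDerivAt (fun z : E => ⟪x, gradient (fun w => φ w s) z⟫)
        ((innerSL ℝ x).comp Hm) x₁ := (innerSL ℝ x).hasFDerivAt.comp (f := fun z : E => gradient (fun w => φ w s) z) x₁ step3
    exact c1.add (c2.const_mul ε)
  have hG1 : gradient (fun z : E => 2 * φ z s + ε * ⟪x, gradient (fun w => φ w s) z⟫) x₁
      = (2:ℝ) • p + ε • (Hm x) := by
    have hdual : (toDual ℝ E) ((2:ℝ) • p + ε • (Hm x))
        = (2:ℝ) • ((fderiv ℝ F (x₁, s)).comp (inl ℝ E ℝ)) + ε • ((innerSL ℝ x).comp Hm) := by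
      refine ContinuousLinearMap.ext fun w => ?_
      simp only [toDual_apply_apply, ContinuousLinearMap.add_apply, ContinuousLinearMap.smul_apply,
        ContinuousLinearMap.comp_apply, ContinuousLinearMap.inl_apply, innerSL_apply_apply,
        smul_eq_mul, inner_add_left, real_inner_smul_left]
      rw [hinner x₁ s w, (hHmsymm x w).trans (real_inner_comm (Hm w) x).symm]
    rw [← hdual] at hf1
    exact ((hasFDerivAt_iff_hasGradientAt.mp hf1).gradient).trans
      ((toDual ℝ E).symm_apply_apply _)
  -- gradient G2
  have hG2 : gradient (fun z : E => 2 * φ x₁ s + ε * ⟪z, gradient (fun w => φ w s) x₁⟫) x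
      = ε • p := by
    have hfun : (fun z : E => 2 * φ x₁ s + ε * ⟪z, gradient (fun w => φ w s) x₁⟫)
        = fun z : E => 2 * φ x₁ s + ε * (innerSL ℝ p z) := by
      funext z
      rw [real_inner_comm]
      simp only [innerSL_apply_apply]
      rfl
    have hf2 : HasFDerivAt (fun z : E => 2 * φ x₁ s + ε * (innerSL ℝ p z))
        (ε • (innerSL ℝ p)) x := ((innerSL ℝ p).hasFDerivAt.const_mul ε).const_add (2 * φ x₁ s)
    have hdual : (toDual ℝ E) (ε • p) = ε • (innerSL ℝ p) := by
      refine ContinuousLinearMap.ext fun w => ?_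
      simp [toDual_apply_apply, real_inner_smul_left]
    rw [← hdual] at hf2
    rw [hfun]
    exact ((hasFDerivAt_iff_hasGradientAt.mp hf2).gradient).trans
      ((toDual ℝ E).symm_apply_apply _)
  -- HJ consequences
  have hderiv_t : ∀ y : E, deriv (φ y) s = fderiv ℝ F (y, s) (0, 1) := fun y =>
    ((hDF (y, s)).comp_hasDerivAt s ((hasDerivAt_const s y).prodMk (hasDerivAt_id s))).deriv
  have ha : fderiv ℝ F (x₁, s) (0, 1) = -(1 / 2 * ‖p‖ ^ 2) := by
    have := hHJ x₁ s
    rw [hderiv_t x₁] at this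
    rw [← hpdef] at this
    linarith
  -- differentiated HJ
  have hqzero : (fun y : E => fderiv ℝ F (y, s) (0, 1)
      + 1 / 2 * ⟪gradient (fun w => φ w s) y, gradient (fun w => φ w s) y⟫)
      = fun _ : E => (0:ℝ) := by
    funext y
    have := hHJ y s
    rw [hderiv_t y] at this
    rw [real_inner_self_eq_norm_sq]
    exact this
  have hq1 : HasFDerivAt (fun y : E => fderiv ℝ F (y, s) (0, 1))
      ((ContinuousLinearMap.apply ℝ ℝ (((0 : E), (1:ℝ)) : E × ℝ)).comp
        (B.comp (inl ℝ E ℝ))) x₁ := by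
    have := (ContinuousLinearMap.apply ℝ ℝ (((0 : E), (1:ℝ)) :
      E × ℝ)).hasFDerivAt.comp (f := fun z : E => fderiv ℝ F (z, s)) x₁ step1
    exact this
  have hq2 : HasFDerivAt (fun y : E =>
        ⟪gradient (fun w => φ w s) y, gradient (fun w => φ w s) y⟫)
      ((fderivInnerCLM ℝ (p, p)).comp (Hm.prod Hm)) x₁ := by
    have := HasFDerivAt.inner ℝ step3 step3
    rw [← hpdef] at this
    exact this
  have hq0 : HasFDerivAt (fun y : E => fderiv ℝ F (y, s) (0, 1)
      + 1 / 2 * ⟪gradient (fun w => φ w s) y, gradient (fun w => φ w s) y⟫)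
      (0 : E →L[ℝ] ℝ) x₁ := by
    rw [hqzero]
    exact hasFDerivAt_const 0 x₁
  have hqu := (hq1.add (hq2.const_mul (1/2 : ℝ))).unique hq0
  have hbx : B (x, 0) (0, 1) = -⟪Hm x, p⟫ := by
    have h0 := DFunLike.congr_fun hqu x
    simp only [ContinuousLinearMap.add_apply, ContinuousLinearMap.comp_apply,
      ContinuousLinearMap.inl_apply, ContinuousLinearMap.apply_apply,
      ContinuousLinearMap.smul_apply, ContinuousLinearMap.prod_apply,
      fderivInnerCLM_apply, smul_eq_mul, ContinuousLinearMap.zero_apply] at h0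
    have hc : ⟪p, Hm x⟫ = ⟪Hm x, p⟫ := real_inner_comm _ _
    rw [hc] at h0
    linarith
  have hb : B (0, 1) (x, 0) = -⟪Hm x, p⟫ := by rw [hsymm (0,1) (x,0)]; exact hbx
  -- assemble
  rw [hT1, hG1, hG2, step3.fderiv, ha, hb]
  have hpp : ‖p‖ ^ 2 = ⟪p, p⟫ := (real_inner_self_eq_norm_sq p).symm
  have e1 : ‖(2:ℝ) • p + ε • (Hm x)‖ ^ 2
      = 4 * ⟪p, p⟫ + 4 * ε * ⟪Hm x, p⟫ + ε ^ 2 * ⟪Hm x, Hm x⟫ := by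
    rw [← real_inner_self_eq_norm_sq]
    simp only [inner_add_left, inner_add_right, real_inner_smul_left, real_inner_smul_right]
    rw [real_inner_comm p (Hm x)]
    ring
  have e2 : ⟪(2:ℝ) • p + ε • (Hm x), ε • p⟫ = ε * (2 * ⟪p, p⟫ + ε * ⟪Hm x, p⟫) := by
    simp only [inner_add_left, real_inner_smul_left, real_inner_smul_right]
    ring
  have e3 : ‖ε • p‖ ^ 2 = ε ^ 2 * ⟪p, p⟫ := by
    rw [← real_inner_self_eq_norm_sq]
    simp only [real_inner_smul_left, real_inner_smul_right]
    ring
  have e4 : ‖Hm x‖ ^ 2 = ⟪Hm x, Hm x⟫ := (real_inner_self_eq_norm_sq _).symm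
  rw [e1, e2, e3, e4, hpp]
  ring

theorem stmt_14 (d : ℕ) (hd : 1 ≤ d) (ε : ℝ)
    (φ : EuclideanSpace ℝ (Fin d) → ℝ → ℝ)
    (hφ : ContDiff ℝ 2 (fun z : EuclideanSpace ℝ (Fin d) × ℝ => φ z.1 z.2))
    (hHJ : ∀ y : EuclideanSpace ℝ (Fin d), ∀ s : ℝ,
      deriv (φ y) s + (1 / 2) * ‖gradient (fun z => φ z s) y‖ ^ 2 = 0) :
    ∀ (x₁ x : EuclideanSpace ℝ (Fin d)) (s : ℝ),
      ε ^ 2 * deriv (fun s' => 2 * φ x₁ s' + ε * ⟪x, gradient (fun z => φ z s') x₁⟫) s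
      + ε ^ 2 / 2 *
          ‖gradient (fun z => 2 * φ z s + ε * ⟪x, gradient (fun w => φ w s) z⟫) x₁‖ ^ 2
      - ε * ⟪gradient (fun z => 2 * φ z s + ε * ⟪x, gradient (fun w => φ w s) z⟫) x₁,
             gradient (fun z => 2 * φ x₁ s + ε * ⟪z, gradient (fun w => φ w s) x₁⟫) x⟫
      + ‖gradient (fun z => 2 * φ x₁ s + ε * ⟪z, gradient (fun w => φ w s) x₁⟫) x‖ ^ 2
      = ε ^ 4 / 2 * ‖fderiv ℝ (fun z => gradient (fun w => φ w s) z) x₁ x‖ ^ 2 := by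
  exact aux_stmt_14 ε φ hφ hHJ
end
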